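/- arXiv:2011.01444 — 2 statements merged into one kernel-verified Lean document; each statement's English description precedes it below -/
import Mathlib

section
/- Let σ : V → Finset V → ℝ be a scoring function on a finite node set V, let ε ≥ 0, let v₀ ∈ V, and let Π ⊆ Π' be candidate parent sets for v₀ (with v₀ ∉ Π') such that σ(v₀, Π) + ε ≤ σ(v₀, Π'). Then for every acyclic parent-set assignment Pa with Pa v₀ = Π', the assignment Pa' obtained by replacing the parent set of v₀ with Π is acyclic and satisfies total(Pa') + ε ≤ total(Pa); in particular, total(Pa) ≥ OPT + ε, where OPT is the minimum total score over all acyclic parent-set assignments on V. -/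
/-- Pruning rule for a score improvement of at least `ε`:
if `P ⊆ P'`, `v₀ ∉ P'`, and `σ v₀ P + ε ≤ σ v₀ P'`, then any acyclic parent-set
assignment `Pa` with `Pa v₀ = P'` can be improved by replacing the parent set of `v₀`
with `P`, and its total score is at least `OPT + ε`. -/
theorem stmt_1 {V : Type*} [Fintype V] [DecidableEq V]
    (σ : V → Finset V → ℝ) (ε : ℝ) (hε : 0 ≤ ε)
    (v₀ : V) (P P' : Finset V) (hsub : P ⊆ P') (hv₀ : v₀ ∉ P')
    (hscore : σ v₀ P + ε ≤ σ v₀ P')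
    (OPT : ℝ)
    (hOPT : IsLeast {x : ℝ | ∃ Q : V → Finset V,
        (∀ v, v ∉ Q v) ∧
        (∀ v, ¬ Relation.TransGen (fun u w => u ∈ Q w) v v) ∧
        (∑ v, σ v (Q v)) = x} OPT)
    (Pa : V → Finset V)
    (hvalid : ∀ v, v ∉ Pa v)
    (hacyc : ∀ v, ¬ Relation.TransGen (fun u w => u ∈ Pa w) v v)
    (hPa : Pa v₀ = P') :
    (∀ v, v ∉ Function.update Pa v₀ P v) ∧
    (∀ v, ¬ Relation.TransGen (fun u w => u ∈ Function.update Pa v₀ P w) v v) ∧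
    (∑ v, σ v (Function.update Pa v₀ P v)) + ε ≤ (∑ v, σ v (Pa v)) ∧
    OPT + ε ≤ ∑ v, σ v (Pa v) := by
  have hsubrel : ∀ u w : V, u ∈ Function.update Pa v₀ P w → u ∈ Pa w := by
    intro u w h
    by_cases hw : w = v₀
    · subst hw
      rw [Function.update_self] at h
      rw [hPa]; exact hsub h
    · rwa [Function.update_of_ne hw] at h
  have hvalid' : ∀ v, v ∉ Function.update Pa v₀ P v := fun v h => hvalid v (hsubrel v v h)
  have hacyc' : ∀ v, ¬ Relation.TransGen (fun u w => u ∈ Function.update Pa v₀ P w) v v := by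
    intro v h
    exact hacyc v (Relation.TransGen.mono hsubrel v v h)
  have hsum : (∑ v, σ v (Function.update Pa v₀ P v)) + ε ≤ ∑ v, σ v (Pa v) := by
    have h1 : ∀ S : V → Finset V,
        ∑ v, σ v (S v) = σ v₀ (S v₀) + ∑ v ∈ Finset.univ.erase v₀, σ v (S v) := by
      intro S
      rw [← Finset.add_sum_erase _ _ (Finset.mem_univ v₀)]
    rw [h1 (Function.update Pa v₀ P), h1 Pa, Function.update_self, hPa]
    have h2 : ∑ v ∈ Finset.univ.erase v₀, σ v (Function.update Pa v₀ P v)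
        = ∑ v ∈ Finset.univ.erase v₀, σ v (Pa v) := by
      apply Finset.sum_congr rfl
      intro v hv
      rw [Function.update_of_ne (Finset.ne_of_mem_erase hv)]
    rw [h2]
    linarith
  refine ⟨hvalid', hacyc', hsum, ?_⟩
  have hmem : OPT ≤ ∑ v, σ v (Function.update Pa v₀ P v) :=
    hOPT.2 ⟨Function.update Pa v₀ P, hvalid', hacyc', rfl⟩
  linarith
end

section
/- Suppose the local score has the BIC form σ(v, Π) = −L(v, Π) + 2^{|Π|}·w, where L(v, Π) ≤ 0 for all v and Π and w ≥ 0. Let ε ≥ 0, let v₀ ∈ V, and let Π ⊂ Π' be candidate parent sets for v₀ such that σ(v₀, Π) − 2^{|Π'|}·w + ε < 0. Then for every candidate parent set Π'' with Π' ⊆ Π'' and v₀ ∉ Π'', one has σ(v₀, Π) + ε < σ(v₀, Π''); consequently, for every acyclic parent-set assignment Pa with Pa v₀ = Π'', replacing the parent set of v₀ by Π yields an acyclic assignment Pa' with total(Pa') + ε < total(Pa), so total(Pa) > OPT + ε. -/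
/-- Pruning rule for the BIC score
`σ v P = -(L v P) + 2^|P| * w` with `L ≤ 0` and `w ≥ 0`: if `P ⊂ P'` and
`σ v₀ P - 2^|P'| * w + ε < 0`, then every superset `P''` of `P'` (with `v₀ ∉ P''`)
satisfies `σ v₀ P + ε < σ v₀ P''`, and hence every acyclic parent-set assignment `Pa`
with `Pa v₀ = P''` can be strictly improved by replacing the parent set of `v₀` by `P`,
so its total score exceeds `OPT + ε`. -/
theorem stmt_2 {V : Type*} [Fintype V] [DecidableEq V]
    (σ L : V → Finset V → ℝ) (w ε : ℝ)
    (hBIC : ∀ v (P : Finset V), σ v P = -(L v P) + 2 ^ P.card * w)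
    (hL : ∀ v (P : Finset V), L v P ≤ 0) (hw : 0 ≤ w) (hε : 0 ≤ ε)
    (v₀ : V) (P P' : Finset V) (hss : P ⊂ P')
    (hcond : σ v₀ P - 2 ^ P'.card * w + ε < 0)
    (OPT : ℝ)
    (hOPT : IsLeast {x : ℝ | ∃ Q : V → Finset V,
        (∀ v, v ∉ Q v) ∧
        (∀ v, ¬ Relation.TransGen (fun u w => u ∈ Q w) v v) ∧
        (∑ v, σ v (Q v)) = x} OPT) :
    ∀ P'' : Finset V, P' ⊆ P'' → v₀ ∉ P'' →
      σ v₀ P + ε < σ v₀ P'' ∧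
      ∀ Pa : V → Finset V,
        (∀ v, v ∉ Pa v) →
        (∀ v, ¬ Relation.TransGen (fun u w => u ∈ Pa w) v v) →
        Pa v₀ = P'' →
        (∀ v, v ∉ Function.update Pa v₀ P v) ∧
        (∀ v, ¬ Relation.TransGen (fun u w => u ∈ Function.update Pa v₀ P w) v v) ∧
        (∑ v, σ v (Function.update Pa v₀ P v)) + ε < (∑ v, σ v (Pa v)) ∧
        OPT + ε < ∑ v, σ v (Pa v) := by
  intro P'' hP'P'' hv₀
  have hPsub : P ⊆ P'' := hss.subset.trans hP'P''
  have h1 : σ v₀ P + ε < σ v₀ P'' := by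
    have hcard : P'.card ≤ P''.card := Finset.card_le_card hP'P''
    have hpow : (2:ℝ) ^ P'.card ≤ 2 ^ P''.card :=
      pow_le_pow_right₀ (by norm_num) hcard
    have hmul : (2:ℝ) ^ P'.card * w ≤ 2 ^ P''.card * w :=
      mul_le_mul_of_nonneg_right hpow hw
    have hσ'' : (2:ℝ) ^ P''.card * w ≤ σ v₀ P'' := by
      rw [hBIC]; linarith [hL v₀ P'']
    linarith
  refine ⟨h1, ?_⟩
  intro Pa hirr hacyc hPa
  have hsub : ∀ u v : V, u ∈ Function.update Pa v₀ P v → u ∈ Pa v := by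
    intro u v hu
    by_cases h : v = v₀
    · subst h
      rw [Function.update_self] at hu
      rw [hPa]; exact hPsub hu
    · rwa [Function.update_of_ne h] at hu
  have hirr' : ∀ v, v ∉ Function.update Pa v₀ P v := fun v hv => hirr v (hsub v v hv)
  have hacyc' : ∀ v, ¬ Relation.TransGen (fun u w => u ∈ Function.update Pa v₀ P w) v v :=
    fun v h => hacyc v (Relation.TransGen.mono hsub v v h)
  have hsum : (∑ v, σ v (Function.update Pa v₀ P v)) + ε < ∑ v, σ v (Pa v) := by
    rw [← Finset.add_sum_erase _ (fun v => σ v (Function.update Pa v₀ P v)) (Finset.mem_univ v₀),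
        ← Finset.add_sum_erase _ (fun v => σ v (Pa v)) (Finset.mem_univ v₀)]
    have he : ∑ v ∈ Finset.univ.erase v₀, σ v (Function.update Pa v₀ P v)
        = ∑ v ∈ Finset.univ.erase v₀, σ v (Pa v) :=
      Finset.sum_congr rfl fun v hv => by
        rw [Function.update_of_ne (Finset.ne_of_mem_erase hv)]
    simp only [he, Function.update_self, hPa]
    linarith
  refine ⟨hirr', hacyc', hsum, ?_⟩
  have hmem : OPT ≤ ∑ v, σ v (Function.update Pa v₀ P v) :=
    hOPT.2 ⟨Function.update Pa v₀ P, hirr', hacyc', rfl⟩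
  linarith
end
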